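/- Shift-invariance of asymptotic growth of exponential polynomials (property (1)): Let s : ℕ → ℝ be an exponential polynomial, i.e. s(i) = Σ_{j=1}^{k} p_j(i)·c_j^i with real polynomials p_j and pairwise distinct nonnegative real bases c_j ≥ 0, and let r ∈ ℕ. Then there exist α, β ∈ ℝ with α > 0 and β > 0 and an index i₀ ∈ ℕ such that α·s(i) ≤ s(i + r) ≤ β·s(i) for all i ≥ i₀; that is, constant shifts of the argument do not change the asymptotic behavior of s up to positive constant factors. -/

import Mathlib

open Filter Polynomial

-- polynomial times geometric tends to zero
lemma aux_geom (q : Polynomial ℝ) (x : ℝ) (hx : |x| < 1) :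
    Tendsto (fun i : ℕ => q.eval (i:ℝ) * x ^ i) atTop (nhds 0) := by
  have h : ∀ i : ℕ, q.eval (i:ℝ) * x ^ i
      = ∑ t ∈ Finset.range (q.natDegree + 1), q.coeff t * ((i:ℝ) ^ t * x ^ i) := by
    intro i
    rw [Polynomial.eval_eq_sum_range, Finset.sum_mul]
    simp [mul_assoc]
  simp only [h]
  have : (0:ℝ) = ∑ t ∈ Finset.range (q.natDegree+1), q.coeff t * 0 := by simp
  rw [this]
  refine tendsto_finset_sum _ fun t _ => Tendsto.const_mul _ ?_
  exact (summable_pow_mul_geometric_of_norm_lt_one (R := ℝ) t (by simpa using hx)).tendsto_atTop_zero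

lemma aux_lead (q : Polynomial ℝ) (hq : q ≠ 0) :
    Tendsto (fun i : ℕ => q.eval (i:ℝ) / (i:ℝ) ^ q.natDegree) atTop (nhds q.leadingCoeff) := by
  have h := q.isEquivalent_atTop_lead
  have hne : ∀ᶠ x : ℝ in atTop, q.leadingCoeff * x ^ q.natDegree ≠ 0 := by
    filter_upwards [eventually_gt_atTop 0] with x hx
    exact mul_ne_zero (leadingCoeff_ne_zero.mpr hq) (by positivity)
  have h1 : Tendsto (fun x : ℝ => q.eval x / (q.leadingCoeff * x ^ q.natDegree)) atTop (nhds 1) :=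
    (Asymptotics.isEquivalent_iff_tendsto_one hne).mp h
  have h2 : Tendsto (fun x : ℝ => q.leadingCoeff *
      (q.eval x / (q.leadingCoeff * x ^ q.natDegree))) atTop (nhds q.leadingCoeff) := by
    simpa using h1.const_mul q.leadingCoeff
  have h3 : ∀ᶠ x : ℝ in atTop, q.leadingCoeff * (q.eval x / (q.leadingCoeff * x ^ q.natDegree))
      = q.eval x / x ^ q.natDegree := by
    filter_upwards [eventually_gt_atTop 0] with x hx
    have hl : q.leadingCoeff ≠ 0 := leadingCoeff_ne_zero.mpr hq
    field_simp
  have h4 := h2.congr' h3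
  exact h4.comp tendsto_natCast_atTop_atTop

lemma aux_main (s : ℕ → ℝ) (k : ℕ) (p : Fin k → Polynomial ℝ) (c : Fin k → ℝ)
    (hc : ∀ j, 0 ≤ c j) (hdist : Function.Injective c)
    (hs : ∀ i : ℕ, s i = ∑ j, (p j).eval (i : ℝ) * (c j) ^ i) :
    (∀ i, 1 ≤ i → s i = 0) ∨ ∃ d a : ℝ, ∃ m : ℕ, 0 < d ∧ a ≠ 0 ∧
      Tendsto (fun i : ℕ => s i / (d ^ i * (i:ℝ) ^ m)) atTop (nhds a) := by
  classical
  set S := Finset.univ.filter (fun j => p j ≠ 0) with hS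
  by_cases hSe : S.Nonempty
  · obtain ⟨j₀, hj₀S, hmax⟩ := S.exists_max_image c hSe
    have hpj₀ : p j₀ ≠ 0 := (Finset.mem_filter.mp hj₀S).2
    by_cases hd : c j₀ = 0
    · left
      intro i hi
      rw [hs]
      apply Finset.sum_eq_zero
      intro j _
      by_cases hj : p j = 0
      · simp [hj]
      · have hjS : j ∈ S := Finset.mem_filter.mpr ⟨Finset.mem_univ j, hj⟩
        have : c j = 0 := le_antisymm (hd ▸ hmax j hjS) (hc j)
        rw [this, zero_pow (by omega), mul_zero]
    · right
      have hd0 : 0 < c j₀ := (hc j₀).lt_of_ne' hd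
      set d := c j₀ with hdd
      set m := (p j₀).natDegree with hm
      refine ⟨d, (p j₀).leadingCoeff, m, hd0, leadingCoeff_ne_zero.mpr hpj₀, ?_⟩
      have key : ∀ j : Fin k, Tendsto
          (fun i : ℕ => (p j).eval (i:ℝ) * (c j) ^ i / (d ^ i * (i:ℝ) ^ m)) atTop
          (nhds (if j = j₀ then (p j₀).leadingCoeff else 0)) := by
        intro j
        by_cases hjj : j = j₀
        · subst hjj
          simp only [if_pos rfl]
          refine (aux_lead _ hpj₀).congr' ?_
          filter_upwards [eventually_ge_atTop 1] with i hi
          have hne : (c j : ℝ) ^ i ≠ 0 := pow_ne_zero _ hd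
          have him : ((i:ℝ)) ^ m ≠ 0 := by positivity
          rw [← hdd, ← hm]
          field_simp
        · simp only [if_neg hjj]
          by_cases hj : p j = 0
          · simp [hj, tendsto_const_nhds]
          · have hjS : j ∈ S := Finset.mem_filter.mpr ⟨Finset.mem_univ j, hj⟩
            have hlt : c j < d := lt_of_le_of_ne (hmax j hjS) (fun h => hjj (hdist h))
            have hx : |c j / d| < 1 := by
              rw [abs_of_nonneg (div_nonneg (hc j) hd0.le)]
              exact (div_lt_one hd0).mpr hlt
            refine squeeze_zero_norm' ?_ (by simpa using (aux_geom (p j) _ hx).abs)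
            filter_upwards [eventually_ge_atTop 1] with i hi
            have h1 : (1:ℝ) ≤ (i:ℝ) ^ m := one_le_pow₀ (by exact_mod_cast hi)
            have heq : (p j).eval (i:ℝ) * (c j) ^ i / (d ^ i * (i:ℝ) ^ m)
                = ((p j).eval (i:ℝ) * (c j / d) ^ i) / (i:ℝ) ^ m := by
              rw [div_pow]
              field_simp
            rw [heq, norm_div, Real.norm_eq_abs ((i:ℝ)^m), abs_of_nonneg (by positivity)]
            exact (div_le_self (norm_nonneg _) h1).trans_eq (by rw [norm_mul, norm_pow, Real.norm_eq_abs, Real.norm_eq_abs])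
      have hsum := tendsto_finset_sum Finset.univ (fun j (_ : j ∈ Finset.univ) => key j)
      have : (∑ j : Fin k, if j = j₀ then (p j₀).leadingCoeff else 0) = (p j₀).leadingCoeff := by
        simp
      rw [this] at hsum
      refine hsum.congr' ?_
      filter_upwards with i
      rw [hs, Finset.sum_div]
  · left
    intro i _
    rw [hs]
    apply Finset.sum_eq_zero
    intro j _
    have : p j = 0 := by
      by_contra hj
      exact hSe ⟨j, Finset.mem_filter.mpr ⟨Finset.mem_univ j, hj⟩⟩
    simp [this]

/-- **Shift-invariance of asymptotic growth of exponential polynomials.** If `s : ℕ → ℝ`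
is an exponential polynomial `s i = ∑ j, (p j).eval i * (c j) ^ i` with real polynomials
`p j` and pairwise distinct nonnegative real bases `c j ≥ 0`, then for any shift `r ∈ ℕ`
there are constants `α, β > 0` and an index `i₀` with
`α * s i ≤ s (i + r) ≤ β * s i` for all `i ≥ i₀`: constant shifts of the argument do not
change the asymptotic behavior of `s` up to positive constant factors. -/
theorem exp_poly_shift_invariance
    (s : ℕ → ℝ) (k : ℕ) (p : Fin k → Polynomial ℝ) (c : Fin k → ℝ)
    (hc : ∀ j, 0 ≤ c j) (hdist : Function.Injective c)
    (hs : ∀ i : ℕ, s i = ∑ j, (p j).eval (i : ℝ) * (c j) ^ i)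
    (r : ℕ) :
    ∃ α β : ℝ, 0 < α ∧ 0 < β ∧ ∃ i₀ : ℕ, ∀ i ≥ i₀,
      α * s i ≤ s (i + r) ∧ s (i + r) ≤ β * s i := by
  rcases aux_main s k p c hc hdist hs with h0 | ⟨d, a, m, hd, ha, hu⟩
  · refine ⟨1, 1, one_pos, one_pos, 1, fun i hi => ?_⟩
    rw [h0 i hi, h0 (i + r) (by omega)]
    norm_num
  · set u : ℕ → ℝ := fun i => s i / (d ^ i * (i:ℝ) ^ m) with hu_def
    set w : ℕ → ℝ := fun i => d ^ r * (((i:ℝ) + r) / i) ^ m with hw_def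
    have hdr : 0 < d ^ r := pow_pos hd r
    have hw : Tendsto w atTop (nhds (d ^ r)) := by
      have h1 : Tendsto (fun i : ℕ => ((i:ℝ) + r) / i) atTop (nhds 1) := by
        have h2 : Tendsto (fun i : ℕ => 1 + (r:ℝ) / i) atTop (nhds 1) := by
          simpa using tendsto_const_nhds.add (tendsto_const_div_atTop_nhds_zero_nat (r:ℝ))
        refine h2.congr' ?_
        filter_upwards [eventually_ge_atTop 1] with i hi
        have hi0 : (i:ℝ) ≠ 0 := by
          have : (1:ℝ) ≤ (i:ℝ) := by exact_mod_cast hi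
          linarith
        field_simp
      have h3 := (h1.pow m).const_mul (d ^ r)
      simpa using h3
    have hur : Tendsto (fun i => u (i + r)) atTop (nhds a) := hu.comp (tendsto_add_atTop_nat r)
    have hgpos : ∀ i : ℕ, 1 ≤ i → 0 < d ^ i * (i:ℝ) ^ m := by
      intro i hi
      have : (0:ℝ) < (i:ℝ) := by exact_mod_cast hi
      positivity
    have hsi : ∀ i : ℕ, 1 ≤ i → s i = u i * (d ^ i * (i:ℝ) ^ m) := by
      intro i hi
      rw [hu_def]
      field_simp
    have hsr : ∀ i : ℕ, 1 ≤ i → s (i + r) = (u (i + r) * w i) * (d ^ i * (i:ℝ) ^ m) := by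
      intro i hi
      have h1 : s (i + r) = u (i + r) * (d ^ (i + r) * ((i + r : ℕ):ℝ) ^ m) := by
        rw [hu_def]
        have := hgpos (i + r) (by omega)
        field_simp
      rw [h1, hw_def]
      have hi0 : (0:ℝ) < (i:ℝ) := by exact_mod_cast hi
      push_cast
      rw [pow_add, div_pow]
      field_simp
    rcases lt_or_gt_of_ne ha with hneg | hpos
    · -- a < 0
      have l1 : Tendsto (fun i => u (i + r) * w i - (2 * d ^ r) * u i) atTop
          (nhds (a * d ^ r - (2 * d ^ r) * a)) := (hur.mul hw).sub (hu.const_mul _)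
      have l2 : Tendsto (fun i => (d ^ r / 2) * u i - u (i + r) * w i) atTop
          (nhds ((d ^ r / 2) * a - a * d ^ r)) := (hu.const_mul _).sub (hur.mul hw)
      have e1 : ∀ᶠ i in atTop, 0 < u (i + r) * w i - (2 * d ^ r) * u i :=
        l1.eventually (eventually_gt_nhds (by nlinarith))
      have e2 : ∀ᶠ i in atTop, 0 < (d ^ r / 2) * u i - u (i + r) * w i :=
        l2.eventually (eventually_gt_nhds (by nlinarith))
      obtain ⟨i₀, H⟩ := eventually_atTop.mp (e1.and (e2.and (eventually_ge_atTop 1)))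
      refine ⟨2 * d ^ r, d ^ r / 2, by positivity, by positivity, i₀, fun i hi => ?_⟩
      obtain ⟨H1, H2, H3⟩ := H i hi
      have hg := hgpos i H3
      rw [hsi i H3, hsr i H3]
      constructor
      · nlinarith [mul_pos H1 hg]
      · nlinarith [mul_pos H2 hg]
    · -- a > 0
      have l1 : Tendsto (fun i => u (i + r) * w i - (d ^ r / 2) * u i) atTop
          (nhds (a * d ^ r - (d ^ r / 2) * a)) := (hur.mul hw).sub (hu.const_mul _)
      have l2 : Tendsto (fun i => (2 * d ^ r) * u i - u (i + r) * w i) atTop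
          (nhds ((2 * d ^ r) * a - a * d ^ r)) := (hu.const_mul _).sub (hur.mul hw)
      have e1 : ∀ᶠ i in atTop, 0 < u (i + r) * w i - (d ^ r / 2) * u i :=
        l1.eventually (eventually_gt_nhds (by nlinarith))
      have e2 : ∀ᶠ i in atTop, 0 < (2 * d ^ r) * u i - u (i + r) * w i :=
        l2.eventually (eventually_gt_nhds (by nlinarith))
      obtain ⟨i₀, H⟩ := eventually_atTop.mp (e1.and (e2.and (eventually_ge_atTop 1)))
      refine ⟨d ^ r / 2, 2 * d ^ r, by positivity, by positivity, i₀, fun i hi => ?_⟩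
      obtain ⟨H1, H2, H3⟩ := H i hi
      have hg := hgpos i H3
      rw [hsi i H3, hsr i H3]
      constructor
      · nlinarith [mul_pos H1 hg]
      · nlinarith [mul_pos H2 hg]
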